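/- Let $t \ge 0$ be an integer and let $f > g > 0$ be real numbers. Then $\int_0^\infty \ln\Big(\frac{1 + f\lambda}{1 + g\lambda}\Big) \lambda^{t} e^{-\lambda} \, d\lambda = t! \sum_{k=1}^{t+1} \Big( e^{1/f} E_{t+2-k}(1/f) - e^{1/g} E_{t+2-k}(1/g) \Big)$, where $E_n(z) = \int_1^\infty s^{-n} e^{-z s} \, ds$ is the generalized exponential integral. -/

import Mathlib

open MeasureTheory Set Filter Real

open MeasureTheory Set

/-- The generalized exponential integral `E_n(z) = ∫_1^∞ s^{-n} e^{-zs} ds`. -/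
noncomputable def expIntE (n : ℕ) (z : ℝ) : ℝ :=
  ∫ s in Ioi (1 : ℝ), s ^ (-(n : ℤ)) * Real.exp (-z * s)


namespace ErgCap

noncomputable def Aint (c : ℝ) (m : ℕ) : ℝ :=
  ∫ x in Ioi (0:ℝ), Real.exp (-x) / (1 + c*x) ^ m

noncomputable def Jint (c : ℝ) (j : ℕ) : ℝ :=
  ∫ x in Ioi (0:ℝ), x ^ j * Real.exp (-x) / (1 + c*x)

variable {c : ℝ}

lemma one_le_den (hc : 0 < c) {x : ℝ} (hx : 0 ≤ x) : 1 ≤ 1 + c*x := by nlinarith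

lemma den_pos (hc : 0 < c) {x : ℝ} (hx : 0 ≤ x) : 0 < 1 + c*x := by nlinarith

lemma int_pow_exp (n : ℕ) :
    IntegrableOn (fun x : ℝ => x ^ n * Real.exp (-x)) (Ioi 0) := by
  have h := Real.GammaIntegral_convergent (s := (n:ℝ) + 1) (by positivity)
  apply h.congr_fun ?_ measurableSet_Ioi
  intro x hx
  have hx' : (0:ℝ) < x := hx
  dsimp only
  rw [add_sub_cancel_right, Real.rpow_natCast, mul_comm]

lemma int_A (hc : 0 < c) (m : ℕ) :
    IntegrableOn (fun x : ℝ => Real.exp (-x) / (1 + c*x) ^ m) (Ioi 0) := by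
  have hint : IntegrableOn (fun x : ℝ => Real.exp (-1 * x)) (Ioi 0) :=
    exp_neg_integrableOn_Ioi 0 one_pos
  apply Integrable.mono hint
  · refine (ContinuousOn.div ?_ ?_ ?_).aestronglyMeasurable measurableSet_Ioi
    · fun_prop
    · fun_prop
    · intro x hx
      have hx' : (0:ℝ) < x := hx
      positivity
  · filter_upwards [ae_restrict_mem measurableSet_Ioi] with x hx
    have hx' : (0:ℝ) < x := hx
    have h1 : (1:ℝ) ≤ (1 + c*x) ^ m := one_le_pow₀ (one_le_den hc hx'.le)
    rw [Real.norm_eq_abs, Real.norm_eq_abs, abs_of_nonneg (by positivity),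
      abs_of_nonneg (by positivity), neg_one_mul]
    calc Real.exp (-x) / (1 + c*x) ^ m ≤ Real.exp (-x) / 1 := by
          apply div_le_div_of_nonneg_left (by positivity) one_pos h1
      _ = Real.exp (-x) := by ring

lemma int_J (hc : 0 < c) (j : ℕ) :
    IntegrableOn (fun x : ℝ => x ^ j * Real.exp (-x) / (1 + c*x)) (Ioi 0) := by
  apply Integrable.mono (int_pow_exp j)
  · refine (ContinuousOn.div ?_ ?_ ?_).aestronglyMeasurable measurableSet_Ioi
    · fun_prop
    · fun_prop
    · intro x hx
      have hx' : (0:ℝ) < x := hx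
      positivity
  · filter_upwards [ae_restrict_mem measurableSet_Ioi] with x hx
    have hx' : (0:ℝ) < x := hx
    have h1 : (1:ℝ) ≤ 1 + c*x := one_le_den hc hx'.le
    rw [Real.norm_eq_abs, Real.norm_eq_abs, abs_of_nonneg (by positivity),
      abs_of_nonneg (by positivity)]
    calc x ^ j * Real.exp (-x) / (1 + c*x) ≤ x ^ j * Real.exp (-x) / 1 := by
          apply div_le_div_of_nonneg_left (by positivity) one_pos h1
      _ = x ^ j * Real.exp (-x) := by ring

lemma log_le (hc : 0 < c) {x : ℝ} (hx : 0 ≤ x) : Real.log (1 + c*x) ≤ c * x := by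
  have := Real.log_le_sub_one_of_pos (den_pos hc hx)
  linarith

lemma int_L (hc : 0 < c) (t : ℕ) :
    IntegrableOn (fun x : ℝ => Real.log (1 + c*x) * x ^ t * Real.exp (-x)) (Ioi 0) := by
  apply Integrable.mono ((int_pow_exp (t+1)).const_mul c)
  · refine ContinuousOn.aestronglyMeasurable ?_ measurableSet_Ioi
    apply ContinuousOn.mul (ContinuousOn.mul ?_ (by fun_prop)) (by fun_prop)
    apply ContinuousOn.log (by fun_prop)
    intro x hx
    have hx' : (0:ℝ) < x := hx
    positivity
  · filter_upwards [ae_restrict_mem measurableSet_Ioi] with x hx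
    have hx' : (0:ℝ) < x := hx
    have h0 : 0 ≤ Real.log (1 + c*x) := Real.log_nonneg (one_le_den hc hx'.le)
    rw [Real.norm_eq_abs, Real.norm_eq_abs, abs_of_nonneg (by positivity),
      abs_of_nonneg (by positivity)]
    calc Real.log (1 + c*x) * x ^ t * Real.exp (-x)
        ≤ (c * x) * x ^ t * Real.exp (-x) := by
          apply mul_le_mul_of_nonneg_right (mul_le_mul_of_nonneg_right (log_le hc hx'.le)
            (by positivity)) (by positivity)
      _ = c * (x ^ (t+1) * Real.exp (-x)) := by ring

lemma gamma_val (j : ℕ) :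
    ∫ x in Ioi (0:ℝ), x ^ j * Real.exp (-x) = (Nat.factorial j : ℝ) := by
  have h2 : Real.Gamma ((j:ℝ) + 1) = (Nat.factorial j : ℝ) := by
    exact_mod_cast Real.Gamma_nat_eq_factorial j
  rw [← h2, Real.Gamma_eq_integral (by positivity)]
  apply setIntegral_congr_fun measurableSet_Ioi
  intro x hx
  have hx' : (0:ℝ) < x := hx
  dsimp only
  rw [add_sub_cancel_right, Real.rpow_natCast, mul_comm]

/-- The A recurrence: `Aint c (m+1) + (m+1) c Aint c (m+2) = 1`. -/
lemma A_rec (hc : 0 < c) (m : ℕ) :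
    Aint c (m+1) + ((m:ℝ)+1) * c * Aint c (m+2) = 1 := by
  set F : ℝ → ℝ := fun x => -(Real.exp (-x) / (1 + c*x) ^ (m+1)) with hF
  set F' : ℝ → ℝ := fun x =>
    Real.exp (-x) / (1 + c*x) ^ (m+1) + ((m:ℝ)+1) * c * (Real.exp (-x) / (1 + c*x) ^ (m+2))
    with hF'
  have hderiv : ∀ x ∈ Ici (0:ℝ), HasDerivAt F (F' x) x := by
    intro x hx
    have hx' : (0:ℝ) ≤ x := hx
    have hden : (0:ℝ) < 1 + c*x := den_pos hc hx'
    have h1 : HasDerivAt (fun x : ℝ => Real.exp (-x)) (-Real.exp (-x)) x := by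
      simpa using ((hasDerivAt_id x).neg.exp)
    have h2 : HasDerivAt (fun x : ℝ => (1 + c*x) ^ (m+1))
        (((m:ℝ)+1) * (1 + c*x) ^ m * c) x := by
      have hb : HasDerivAt (fun x : ℝ => 1 + c*x) c x := by
        simpa using ((hasDerivAt_id x).const_mul c).const_add 1
      have := (hb.fun_pow (m+1))
      simpa [Nat.add_sub_cancel, mul_comm, mul_assoc, mul_left_comm] using this
    have h3 := (h1.div h2 (by positivity)).neg
    refine h3.congr_deriv ?_
    rw [hF']
    field_simp
    ring
  have hlim : Tendsto F atTop (nhds 0) := by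
    rw [← neg_zero]
    apply Tendsto.neg
    apply squeeze_zero' (f := fun x => Real.exp (-x) / (1 + c*x) ^ (m+1))
      (g := fun x => Real.exp (-x)) ?_ ?_ tendsto_exp_neg_atTop_nhds_zero
    · filter_upwards [eventually_gt_atTop 0] with x hx
      positivity
    · filter_upwards [eventually_gt_atTop 0] with x hx
      have h1 : (1:ℝ) ≤ (1 + c*x) ^ (m+1) := one_le_pow₀ (one_le_den hc hx.le)
      calc Real.exp (-x) / (1 + c*x) ^ (m+1) ≤ Real.exp (-x) / 1 :=
            div_le_div_of_nonneg_left (by positivity) one_pos h1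
        _ = Real.exp (-x) := by ring
  have hint : IntegrableOn F' (Ioi 0) :=
    (int_A hc (m+1)).add ((int_A hc (m+2)).const_mul _)
  have := integral_Ioi_of_hasDerivAt_of_tendsto' hderiv hint hlim
  have hF0 : F 0 = -1 := by simp [hF]
  rw [hF0] at this
  have hsplit : ∫ x in Ioi (0:ℝ), F' x = Aint c (m+1) + ((m:ℝ)+1) * c * Aint c (m+2) := by
    have i1 : IntegrableOn (fun x : ℝ => Real.exp (-x) / (1 + c*x) ^ (m+1)) (Ioi 0) :=
      int_A hc (m+1)
    have i2 : IntegrableOn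
        (fun x : ℝ => ((m:ℝ)+1) * c * (Real.exp (-x) / (1 + c*x) ^ (m+2))) (Ioi 0) :=
      (int_A hc (m+2)).const_mul _
    rw [hF']
    rw [integral_add i1 i2, integral_const_mul]
    rfl
  rw [hsplit] at this
  linarith

lemma J_rec (hc : 0 < c) (j : ℕ) :
    c * Jint c (j+1) = (Nat.factorial j : ℝ) - Jint c j := by
  have h1 : c * Jint c (j+1) =
      ∫ x in Ioi (0:ℝ), c * (x ^ (j+1) * Real.exp (-x) / (1 + c*x)) := by
    rw [Jint, ← integral_const_mul]
  rw [h1]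
  have h2 : ∀ x ∈ Ioi (0:ℝ), c * (x ^ (j+1) * Real.exp (-x) / (1 + c*x)) =
      x ^ j * Real.exp (-x) - x ^ j * Real.exp (-x) / (1 + c*x) := by
    intro x hx
    have hx' : (0:ℝ) < x := hx
    have hden : (0:ℝ) < 1 + c*x := den_pos hc hx'.le
    field_simp
    ring
  rw [setIntegral_congr_fun measurableSet_Ioi h2,
    integral_sub (int_pow_exp j) (int_J hc j), gamma_val j]
  rfl

lemma J0 (hc : 0 < c) : Jint c 0 = Aint c 1 := by
  simp [Jint, Aint]

lemma J_eq (hc : 0 < c) (m : ℕ) :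
    Jint c m = (Nat.factorial m : ℝ) * Aint c (m+1) := by
  induction m with
  | zero => simpa using J0 hc
  | succ m ih =>
      have hrec := J_rec hc m
      have hA := A_rec hc m
      have hc' : c ≠ 0 := hc.ne'
      have : c * Jint c (m+1) = c * ((Nat.factorial (m+1) : ℝ) * Aint c (m+2)) := by
        rw [hrec, ih]
        rw [Nat.factorial_succ]
        push_cast
        nlinarith [hA]
      exact mul_left_cancel₀ hc' this

/-- The main integral recursion via FTC. -/
lemma L_rec (hc : 0 < c) (t : ℕ) :
    ∫ x in Ioi (0:ℝ), Real.log (1 + c*x) * x ^ t * Real.exp (-x)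
      = (t:ℝ) * (∫ x in Ioi (0:ℝ), Real.log (1 + c*x) * x ^ (t-1) * Real.exp (-x))
        + c * Jint c t := by
  set F : ℝ → ℝ := fun x => -(Real.exp (-x) * x ^ t * Real.log (1 + c*x)) with hF
  set F' : ℝ → ℝ := fun x =>
    Real.log (1 + c*x) * x ^ t * Real.exp (-x)
      - (t:ℝ) * (Real.log (1 + c*x) * x ^ (t-1) * Real.exp (-x))
      - c * (x ^ t * Real.exp (-x) / (1 + c*x)) with hF'
  have hderiv : ∀ x ∈ Ici (0:ℝ), HasDerivAt F (F' x) x := by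
    intro x hx
    have hx' : (0:ℝ) ≤ x := hx
    have hden : (0:ℝ) < 1 + c*x := den_pos hc hx'
    have h1 : HasDerivAt (fun x : ℝ => Real.exp (-x)) (-Real.exp (-x)) x := by
      simpa using ((hasDerivAt_id x).neg.exp)
    have h2 : HasDerivAt (fun x : ℝ => x ^ t) ((t:ℝ) * x ^ (t-1)) x := hasDerivAt_pow t x
    have hb : HasDerivAt (fun x : ℝ => 1 + c*x) c x := by
      simpa using ((hasDerivAt_id x).const_mul c).const_add 1
    have h3 : HasDerivAt (fun x : ℝ => Real.log (1 + c*x)) (c / (1 + c*x)) x := by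
      simpa using hb.log hden.ne'
    have h4 := (((h1.mul h2).mul h3).neg)
    refine h4.congr_deriv ?_
    rw [hF', Pi.mul_apply]
    field_simp
    ring
  have hlim : Tendsto F atTop (nhds 0) := by
    rw [← neg_zero]
    apply Tendsto.neg
    have hbig : Tendsto (fun x : ℝ => c * (x ^ (t+1) * Real.exp (-x))) atTop (nhds 0) := by
      have := (tendsto_pow_mul_exp_neg_atTop_nhds_zero (t+1)).const_mul c
      simpa using this
    apply squeeze_zero' ?_ ?_ hbig
    · filter_upwards [eventually_gt_atTop 0] with x hx
      have h0 : 0 ≤ Real.log (1 + c*x) := Real.log_nonneg (one_le_den hc hx.le)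
      positivity
    · filter_upwards [eventually_gt_atTop 0] with x hx
      calc Real.exp (-x) * x ^ t * Real.log (1 + c*x)
          ≤ Real.exp (-x) * x ^ t * (c * x) := by
            apply mul_le_mul_of_nonneg_left (log_le hc hx.le) (by positivity)
        _ = c * (x ^ (t+1) * Real.exp (-x)) := by ring
  have i1 : IntegrableOn (fun x : ℝ => Real.log (1 + c*x) * x ^ t * Real.exp (-x)) (Ioi 0) :=
    int_L hc t
  have i2 : IntegrableOn
      (fun x : ℝ => (t:ℝ) * (Real.log (1 + c*x) * x ^ (t-1) * Real.exp (-x))) (Ioi 0) :=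
    (int_L hc (t-1)).const_mul _
  have i3 : IntegrableOn (fun x : ℝ => c * (x ^ t * Real.exp (-x) / (1 + c*x))) (Ioi 0) :=
    (int_J hc t).const_mul _
  have i12 : IntegrableOn (fun x : ℝ => Real.log (1 + c*x) * x ^ t * Real.exp (-x)
      - (t:ℝ) * (Real.log (1 + c*x) * x ^ (t-1) * Real.exp (-x))) (Ioi 0) := i1.sub i2
  have hint : IntegrableOn F' (Ioi 0) := i12.sub i3
  have key := integral_Ioi_of_hasDerivAt_of_tendsto' hderiv hint hlim
  have hF0 : F 0 = 0 := by simp [hF]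
  rw [hF0, sub_zero] at key
  have hsplit : ∫ x in Ioi (0:ℝ), F' x
      = (∫ x in Ioi (0:ℝ), Real.log (1 + c*x) * x ^ t * Real.exp (-x))
        - (t:ℝ) * (∫ x in Ioi (0:ℝ), Real.log (1 + c*x) * x ^ (t-1) * Real.exp (-x))
        - c * Jint c t := by
    rw [hF']
    rw [integral_sub i12 i3, integral_sub i1 i2, integral_const_mul, integral_const_mul, Jint]
  rw [hsplit] at key
  linarith

lemma L_val (hc : 0 < c) (t : ℕ) :
    ∫ x in Ioi (0:ℝ), Real.log (1 + c*x) * x ^ t * Real.exp (-x)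
      = (Nat.factorial t : ℝ) * ∑ j ∈ Finset.range (t+1), c * Aint c (j+1) := by
  induction t with
  | zero =>
      have h := L_rec hc 0
      simp only [Nat.cast_zero, zero_mul, zero_add] at h
      rw [h, J_eq hc 0]
      simp
  | succ t ih =>
      have h := L_rec hc (t+1)
      simp only [Nat.add_sub_cancel] at h
      rw [h, ih, J_eq hc (t+1)]
      conv_rhs => rw [Finset.sum_range_succ]
      push_cast [Nat.factorial_succ]
      ring

lemma expIntE_eq (hc : 0 < c) (m : ℕ) :
    Real.exp (1/c) * expIntE m (1/c) = c * Aint c m := by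
  have hc' : c ≠ 0 := hc.ne'
  have step1 : expIntE m (1/c)
      = ∫ x in Ioi (0:ℝ), (x+1) ^ (-(m:ℤ)) * Real.exp (-(1/c) * (x+1)) := by
    rw [expIntE]
    have h := (measurePreserving_add_right (volume : Measure ℝ) 1).setIntegral_preimage_emb
      (measurableEmbedding_addRight 1)
      (fun s : ℝ => s ^ (-(m:ℤ)) * Real.exp (-(1/c) * s)) (Ioi 1)
    rw [← h]
    rw [preimage_add_const_Ioi]
    norm_num
  have step2 : ∫ x in Ioi (0:ℝ), (x+1) ^ (-(m:ℤ)) * Real.exp (-(1/c) * (x+1))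
      = c * ∫ lam in Ioi (0:ℝ), (c*lam+1) ^ (-(m:ℤ)) * Real.exp (-(1/c) * (c*lam+1)) := by
    have h := integral_comp_mul_left_Ioi
      (fun x : ℝ => (x+1) ^ (-(m:ℤ)) * Real.exp (-(1/c) * (x+1))) 0 hc
    rw [mul_zero] at h
    rw [h]
    simp [smul_eq_mul, hc']
  rw [step1, step2]
  have step3 : ∀ lam ∈ Ioi (0:ℝ),
      (c*lam+1) ^ (-(m:ℤ)) * Real.exp (-(1/c) * (c*lam+1))
        = Real.exp (-(1/c)) * (Real.exp (-lam) / (1 + c*lam) ^ m) := by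
    intro lam hlam
    have hlam' : (0:ℝ) < lam := hlam
    have hden : (0:ℝ) < 1 + c*lam := den_pos hc hlam'.le
    have h1 : (c*lam+1) ^ (-(m:ℤ)) = 1 / (1 + c*lam) ^ m := by
      rw [zpow_neg, zpow_natCast, add_comm (c*lam) 1]
      exact inv_eq_one_div _
    have h2 : -(1/c) * (c*lam+1) = -lam + -(1/c) := by field_simp; ring
    rw [h1, h2, Real.exp_add]
    ring
  rw [setIntegral_congr_fun measurableSet_Ioi step3, integral_const_mul]
  rw [Aint, ← mul_assoc, ← mul_assoc]
  rw [show Real.exp (1/c) * c * Real.exp (-(1/c)) = c from by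
    rw [mul_right_comm, ← Real.exp_add]; simp]

lemma key_lemma (t : ℕ) (hc : 0 < c) :
    ∫ x in Ioi (0:ℝ), Real.log (1 + c*x) * x ^ t * Real.exp (-x)
      = (Nat.factorial t : ℝ) * ∑ k ∈ Finset.Icc 1 (t + 1),
          Real.exp (1/c) * expIntE (t + 2 - k) (1/c) := by
  rw [L_val hc t]
  congr 1
  rw [show Finset.Icc 1 (t+1) = Finset.Ico 1 (t+2) from by
    exact (Finset.Ico_add_one_right_eq_Icc 1 (t+1)).symm]
  rw [Finset.sum_Ico_eq_sum_range]
  have hn : t + 2 - 1 = t + 1 := by omega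
  rw [hn]
  rw [← Finset.sum_range_reflect (fun i => Real.exp (1/c) * expIntE (t + 2 - (1 + i)) (1/c))]
  apply Finset.sum_congr rfl
  intro j hj
  have hj' : j < t + 1 := Finset.mem_range.mp hj
  have hidx : t + 2 - (1 + (t + 1 - 1 - j)) = j + 1 := by omega
  rw [hidx, expIntE_eq hc (j+1)]

end ErgCap

theorem integral_log_ratio_mul_pow_mul_exp
    (t : ℕ) (f g : ℝ) (hg : 0 < g) (hfg : g < f) :
    ∫ lam in Ioi (0 : ℝ),
        Real.log ((1 + f * lam) / (1 + g * lam)) * lam ^ t * Real.exp (-lam)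
      = (Nat.factorial t : ℝ)
          * ∑ k ∈ Finset.Icc 1 (t + 1),
              (Real.exp (1 / f) * expIntE (t + 2 - k) (1 / f)
                - Real.exp (1 / g) * expIntE (t + 2 - k) (1 / g)) := by
  have hf : 0 < f := hg.trans hfg
  have hsplit : ∀ lam ∈ Ioi (0:ℝ),
      Real.log ((1 + f * lam) / (1 + g * lam)) * lam ^ t * Real.exp (-lam)
        = Real.log (1 + f * lam) * lam ^ t * Real.exp (-lam)
          - Real.log (1 + g * lam) * lam ^ t * Real.exp (-lam) := by
    intro lam hlam
    have hlam' : (0:ℝ) < lam := hlam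
    rw [Real.log_div (by nlinarith) (by nlinarith)]
    ring
  rw [setIntegral_congr_fun measurableSet_Ioi hsplit,
    integral_sub (ErgCap.int_L hf t) (ErgCap.int_L hg t),
    ErgCap.key_lemma t hf, ErgCap.key_lemma t hg,
    ← mul_sub, ← Finset.sum_sub_distrib]
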